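/- For every finite simple graph G and every integer m ≥ 1, the trace of the m-th power of the non-backtracking edge-adjacency matrix B satisfies trace(B^m) = Σ_{l | m} l · N_l, where the sum runs over the positive divisors l of m and N_l is the number of primitive cycle classes of length l. -/

import Mathlib

open Matrix

variable {V : Type*}

/-- A dart `d'` follows a dart `d` without backtracking. -/
def FollowsNB {G : SimpleGraph V} (d' d : G.Dart) : Prop :=
  d'.fst = d.snd ∧ d' ≠ d.symm

instance {G : SimpleGraph V} [DecidableEq V] (d' d : G.Dart) : Decidable (FollowsNB d' d) :=
  inferInstanceAs (Decidable (_ ∧ _))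

/-- The non-backtracking edge-adjacency matrix of a finite simple graph. -/
def nbMatrix (G : SimpleGraph V) [Fintype V] [DecidableEq V] [DecidableRel G.Adj] :
    Matrix G.Dart G.Dart ℂ :=
  fun d' d => if FollowsNB d' d then 1 else 0

/-- A closed non-backtracking cycle of length `m`. -/
def IsNBCycle (G : SimpleGraph V) {m : ℕ} (c : ZMod m → G.Dart) : Prop :=
  ∀ i, FollowsNB (c (i + 1)) (c i)

/-- A cycle is primitive if it is not the repetition of a cycle of shorter length
`l` properly dividing `m`. -/
def IsPrimitiveCycle (G : SimpleGraph V) {m : ℕ} (c : ZMod m → G.Dart) : Prop :=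
  ¬ ∃ (l : ℕ) (h : l ∣ m), l < m ∧ ∃ c' : ZMod l → G.Dart,
      IsNBCycle G c' ∧ c = c' ∘ (ZMod.castHom h (ZMod l))

/-- Primitive closed non-backtracking cycles of length `m`. -/
def PrimCycle (G : SimpleGraph V) (m : ℕ) :=
  {c : ZMod m → G.Dart // IsNBCycle G c ∧ IsPrimitiveCycle G c}

/-- Two cycles are equivalent iff one is a rotation of the other. -/
def rotSetoid (G : SimpleGraph V) (m : ℕ) : Setoid (PrimCycle G m) where
  r c c' := ∃ k : ZMod m, ∀ i, c'.1 i = c.1 (i + k)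
  iseqv := by
    constructor
    · exact fun c => ⟨0, fun i => by rw [add_zero]⟩
    · rintro c c' ⟨k, hk⟩
      refine ⟨-k, fun i => ?_⟩
      rw [hk]
      ring_nf
    · rintro c c' c'' ⟨k, hk⟩ ⟨k', hk'⟩
      refine ⟨k' + k, fun i => ?_⟩
      rw [hk', hk]
      ring_nf

/-- Rotation-classes of primitive cycles of length `m`. -/
def PrimClass (G : SimpleGraph V) (m : ℕ) := Quotient (rotSetoid G m)

namespace NBAux

variable {V : Type*} {G : SimpleGraph V}

/-- Lift of a cyclic function to `ℕ`. -/
def Lft {m : ℕ} (c : ZMod m → G.Dart) : ℕ → G.Dart := fun n => c (n : ZMod m)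

theorem hasPeriod_mul {f : ℕ → G.Dart} {a : ℕ} (h : ∀ n, f (n + a) = f n) (k : ℕ) :
    ∀ n, f (n + a * k) = f n := by
  intro n
  induction k with
  | zero => simp
  | succ k ih =>
    have : n + a * (k + 1) = (n + a * k) + a := by ring
    rw [this, h, ih]

theorem hasPeriod_gcd {f : ℕ → G.Dart} : ∀ a b : ℕ, (∀ n, f (n + a) = f n) →
    (∀ n, f (n + b) = f n) → ∀ n, f (n + Nat.gcd a b) = f n := by
  intro a b
  induction a, b using Nat.gcd.induction with
  | H0 b => intro _ hb n; simpa using hb n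
  | H1 a b ha ih =>
    intro hpa hpb
    rw [Nat.gcd_rec]
    refine ih (fun n => ?_) hpa
    calc f (n + b % a) = f (n + b % a + a * (b / a)) := (hasPeriod_mul hpa _ _).symm
      _ = f (n + b) := by rw [Nat.add_assoc, Nat.mod_add_div]
      _ = f n := hpb n

theorem lft_follows {m : ℕ} {c : ZMod m → G.Dart} (hc : IsNBCycle G c) (n : ℕ) :
    FollowsNB (Lft c (n + 1)) (Lft c n) := by
  have := hc (n : ZMod m)
  simpa [Lft] using this

theorem lft_add_self {m : ℕ} (c : ZMod m → G.Dart) (n : ℕ) : Lft c (n + m) = Lft c n := by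
  simp [Lft]

theorem apply_val {m : ℕ} [NeZero m] (c : ZMod m → G.Dart) (x : ZMod m) : c x = Lft c x.val := by
  unfold Lft
  rw [ZMod.natCast_rightInverse x]

/-- Factor an `l`-periodic function through `ZMod l`. -/
def factorC (l : ℕ) (f : ℕ → G.Dart) : ZMod l → G.Dart := fun x => f x.val

theorem factorC_natCast {l : ℕ} [NeZero l] {f : ℕ → G.Dart} (hp : ∀ n, f (n + l) = f n) (n : ℕ) :
    factorC l f ((n : ZMod l)) = f n := by
  unfold factorC
  rw [ZMod.val_natCast]
  conv_rhs => rw [← Nat.mod_add_div n l]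
  exact (hasPeriod_mul hp _ _).symm

theorem lft_factorC {l : ℕ} [NeZero l] {f : ℕ → G.Dart} (hp : ∀ n, f (n + l) = f n) :
    Lft (G := G) (factorC l f) = f := by
  funext n
  unfold Lft
  exact factorC_natCast hp n

theorem isNBCycle_factorC {l : ℕ} [NeZero l] {f : ℕ → G.Dart}
    (hf : ∀ n, FollowsNB (f (n + 1)) (f n)) (hp : ∀ n, f (n + l) = f n) :
    IsNBCycle G (factorC l f) := by
  intro i
  have hi : ((i.val : ℕ) : ZMod l) = i := ZMod.natCast_rightInverse i
  have e1 : factorC l f (i + 1) = f (i.val + 1) := by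
    conv_lhs => rw [← hi]
    rw [← Nat.cast_one (R := ZMod l), ← Nat.cast_add, factorC_natCast hp]
  have e2 : factorC l f i = f i.val := by
    conv_lhs => rw [← hi]
    rw [factorC_natCast hp]
  rw [e1, e2]
  exact hf i.val

theorem eq_comp_iff {m l : ℕ} [NeZero m] (h : l ∣ m) (c : ZMod m → G.Dart)
    (c' : ZMod l → G.Dart) :
    c = c' ∘ (ZMod.castHom h (ZMod l)) ↔ ∀ n : ℕ, c ((n : ZMod m)) = c' ((n : ZMod l)) := by
  constructor
  · intro he n
    rw [he]
    exact congrArg c' (map_natCast (ZMod.castHom h (ZMod l)) n)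
  · intro he
    funext x
    have hx : ((x.val : ℕ) : ZMod m) = x := ZMod.natCast_rightInverse x
    calc c x = c ((x.val : ℕ) : ZMod m) := by rw [hx]
      _ = c' ((x.val : ℕ) : ZMod l) := he _
      _ = (c' ∘ (ZMod.castHom h (ZMod l))) x := by
          conv_rhs => rw [Function.comp_apply, ← hx, map_natCast]

theorem lft_comp {m l : ℕ} (h : l ∣ m) (c' : ZMod l → G.Dart) (n : ℕ) :
    Lft (G := G) (c' ∘ (ZMod.castHom h (ZMod l))) n = Lft c' n := by
  simp [Lft, map_natCast]

theorem period_of_comp {m l : ℕ} (h : l ∣ m) (c' : ZMod l → G.Dart) (n : ℕ) :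
    Lft (G := G) (c' ∘ (ZMod.castHom h (ZMod l))) (n + l) =
      Lft (c' ∘ (ZMod.castHom h (ZMod l))) n := by
  rw [lft_comp, lft_comp]
  exact lft_add_self c' n

theorem prim_iff {m : ℕ} [NeZero m] {c : ZMod m → G.Dart} (hc : IsNBCycle G c) :
    IsPrimitiveCycle G c ↔ ∀ l, l ∣ m → (∀ n, Lft c (n + l) = Lft c n) → m ≤ l := by
  constructor
  · intro hprim l hdvd hper
    by_contra hlt
    push_neg at hlt
    have hl0 : l ≠ 0 := by
      rintro rfl
      exact NeZero.ne m (Nat.eq_zero_of_zero_dvd hdvd)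
    haveI : NeZero l := ⟨hl0⟩
    refine hprim ⟨l, hdvd, hlt, factorC l (Lft c),
      isNBCycle_factorC (lft_follows hc) hper, ?_⟩
    rw [eq_comp_iff hdvd]
    intro n
    rw [factorC_natCast hper]
    rfl
  · rintro hmin ⟨l, hdvd, hlt, c', hc', heq⟩
    have hper : ∀ n, Lft c (n + l) = Lft c n := by
      intro n
      rw [heq]
      exact period_of_comp hdvd c' n
    exact absurd (hmin l hdvd hper) (by omega)

theorem le_period_of_prim {m l : ℕ} [NeZero m] [NeZero l] (h : l ∣ m)
    {c' : ZMod l → G.Dart} (hc' : IsNBCycle G c') (hp' : IsPrimitiveCycle G c')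
    {l' : ℕ} (hper : ∀ n, Lft (G := G) (c' ∘ (ZMod.castHom h (ZMod l))) (n + l') =
      Lft (c' ∘ (ZMod.castHom h (ZMod l))) n) (hl'0 : 0 < l') : l ≤ l' := by
  have hper' : ∀ n, Lft (G := G) c' (n + l') = Lft c' n := by
    intro n
    have := hper n
    rwa [lft_comp, lft_comp] at this
  have hg : ∀ n, Lft (G := G) c' (n + Nat.gcd l' l) = Lft c' n :=
    hasPeriod_gcd _ _ hper' (lft_add_self c')
  have h1 : l ≤ Nat.gcd l' l := (prim_iff hc').mp hp' _ (Nat.gcd_dvd_right _ _) hg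
  exact h1.trans (Nat.gcd_le_left _ hl'0)

theorem hasPeriod_iff_zmod {m : ℕ} [NeZero m] (c : ZMod m → G.Dart) (p : ℕ) :
    (∀ n, Lft c (n + p) = Lft c n) ↔ ∀ x : ZMod m, c (x + (p : ZMod m)) = c x := by
  constructor
  · intro h x
    have hx : ((x.val : ℕ) : ZMod m) = x := ZMod.natCast_rightInverse x
    have := h x.val
    simp only [Lft, Nat.cast_add, hx] at this
    exact this
  · intro h n
    simp only [Lft, Nat.cast_add]
    exact h _

theorem period_val {l : ℕ} [NeZero l] {c : ZMod l → G.Dart} {d : ZMod l}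
    (hd : ∀ x, c (x + d) = c x) (n : ℕ) : Lft c (n + d.val) = Lft c n := by
  refine (hasPeriod_iff_zmod c d.val).mpr (fun x => ?_) n
  rw [ZMod.natCast_rightInverse d]
  exact hd x

theorem rot_eq_zero {l : ℕ} [NeZero l] {c : ZMod l → G.Dart} (hc : IsNBCycle G c)
    (hp : IsPrimitiveCycle G c) {d : ZMod l} (hd : ∀ x, c (x + d) = c x) : d = 0 := by
  by_contra hne
  have hdv : 0 < d.val := Nat.pos_of_ne_zero (fun h0 => hne ((ZMod.val_eq_zero d).mp h0))
  have hlt : d.val < l := ZMod.val_lt d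
  have hper : ∀ n, Lft (G := G) c (n + Nat.gcd d.val l) = Lft c n :=
    hasPeriod_gcd _ _ (period_val hd) (lft_add_self c)
  have h1 : l ≤ Nat.gcd d.val l := (prim_iff hc).mp hp _ (Nat.gcd_dvd_right _ _) hper
  have h2 : Nat.gcd d.val l ≤ d.val := Nat.gcd_le_left _ hdv
  omega

theorem prim_rot {l : ℕ} [NeZero l] {c : ZMod l → G.Dart} (hc : IsNBCycle G c)
    (hp : IsPrimitiveCycle G c) (k : ZMod l) :
    IsPrimitiveCycle G (fun i => c (i + k)) := by
  have hcrot : IsNBCycle G (fun i => c (i + k)) := fun i => by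
    simpa [add_right_comm] using hc (i + k)
  rw [prim_iff hcrot]
  intro p hdvd hper
  refine (prim_iff hc).mp hp p hdvd ?_
  rw [hasPeriod_iff_zmod] at hper ⊢
  intro x
  have := hper (x - k)
  simpa [sub_add_cancel, add_right_comm] using this

end NBAux

namespace NBAux

section TraceCount

variable {ι : Type*} [Fintype ι] [DecidableEq ι]

theorem pow_apply_eq_sum (A : Matrix ι ι ℂ) (n : ℕ) (d e : ι) :
    (A ^ n) d e = ∑ f : Fin (n + 1) → ι,
      if f 0 = e ∧ f (Fin.last n) = d then (∏ i : Fin n, A (f i.succ) (f i.castSucc)) else 0 := by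
  induction n generalizing d e with
  | zero =>
    rw [pow_zero]
    rw [← (Equiv.funUnique (Fin 1) ι).symm.sum_comp]
    have key : ∀ x : ι, (if ((Equiv.funUnique (Fin 1) ι).symm x) 0 = e ∧
        ((Equiv.funUnique (Fin 1) ι).symm x) (Fin.last 0) = d then
        (∏ i : Fin 0, A (((Equiv.funUnique (Fin 1) ι).symm x) i.succ)
          (((Equiv.funUnique (Fin 1) ι).symm x) i.castSucc)) else 0) =
        if x = e then (if x = d then 1 else 0) else (0 : ℂ) := by
      intro x
      simp [ite_and]
    rw [Fintype.sum_congr _ _ key, Finset.sum_ite_eq' Finset.univ e,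
      if_pos (Finset.mem_univ _), Matrix.one_apply]
    by_cases h : d = e
    · rw [if_pos h, if_pos h.symm]
    · rw [if_neg h, if_neg (fun he => h he.symm)]
  | succ n ih =>
    rw [pow_succ, Matrix.mul_apply]
    rw [← Equiv.sum_comp (Fin.consEquiv (fun _ : Fin (n + 2) => ι))]
    have key : ∀ p : ι × (Fin (n + 1) → ι),
        (if (Fin.consEquiv (fun _ : Fin (n + 2) => ι) p) 0 = e ∧
            (Fin.consEquiv (fun _ : Fin (n + 2) => ι) p) (Fin.last (n + 1)) = d then
          (∏ i : Fin (n + 1), A ((Fin.consEquiv (fun _ : Fin (n + 2) => ι) p) i.succ)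
            ((Fin.consEquiv (fun _ : Fin (n + 2) => ι) p) i.castSucc)) else 0) =
        (if p.1 = e ∧ p.2 (Fin.last n) = d then A (p.2 0) p.1 *
          (∏ i : Fin n, A (p.2 i.succ) (p.2 i.castSucc)) else 0) := by
      rintro ⟨x, t⟩
      have h0 : (Fin.consEquiv (fun _ : Fin (n + 2) => ι)) (x, t) = Fin.cons x t := rfl
      rw [h0]
      have hlast : (Fin.cons x t : Fin (n + 2) → ι) (Fin.last (n + 1)) = t (Fin.last n) := by
        rw [← Fin.succ_last, Fin.cons_succ]
      have hprod : (∏ i : Fin (n + 1), A ((Fin.cons x t : Fin (n + 2) → ι) i.succ)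
            ((Fin.cons x t : Fin (n + 2) → ι) i.castSucc)) =
          A (t 0) x * ∏ i : Fin n, A (t i.succ) (t i.castSucc) := by
        rw [Fin.prod_univ_succ]
        simp only [← Fin.succ_castSucc, Fin.cons_succ, Fin.castSucc_zero, Fin.cons_zero]
      rw [Fin.cons_zero, hlast, hprod]
    rw [Fintype.sum_congr _ _ key]
    rw [Fintype.sum_prod_type]
    have collapse1 : ∀ x : ι, (∑ t : Fin (n + 1) → ι,
        if x = e ∧ t (Fin.last n) = d then A (t 0) x *
          (∏ i : Fin n, A (t i.succ) (t i.castSucc)) else 0) =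
        if x = e then (∑ t : Fin (n + 1) → ι, if t (Fin.last n) = d then A (t 0) x *
          (∏ i : Fin n, A (t i.succ) (t i.castSucc)) else 0) else 0 := by
      intro x
      by_cases hx : x = e <;> simp [hx]
    rw [Fintype.sum_congr _ _ collapse1, Finset.sum_ite_eq' Finset.univ e,
      if_pos (Finset.mem_univ e)]
    have expand : ∀ x : ι, (A ^ n) d x * A x e = ∑ t : Fin (n + 1) → ι,
        if t 0 = x ∧ t (Fin.last n) = d then
          (∏ i : Fin n, A (t i.succ) (t i.castSucc)) * A x e else 0 := by
      intro x
      rw [ih, Finset.sum_mul]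
      refine Finset.sum_congr rfl fun t _ => ?_
      rw [ite_mul, zero_mul]
    rw [Fintype.sum_congr _ _ expand, Finset.sum_comm]
    refine Finset.sum_congr rfl fun t _ => ?_
    have split : ∀ x : ι, (if t 0 = x ∧ t (Fin.last n) = d then
        (∏ i : Fin n, A (t i.succ) (t i.castSucc)) * A x e else 0) =
        if t 0 = x then (if t (Fin.last n) = d then
          (∏ i : Fin n, A (t i.succ) (t i.castSucc)) * A x e else 0) else 0 := by
      intro x
      by_cases hx : t 0 = x <;> simp [hx]
    rw [Fintype.sum_congr _ _ split, Finset.sum_ite_eq Finset.univ (t 0),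
      if_pos (Finset.mem_univ _)]
    by_cases ht : t (Fin.last n) = d <;> simp [ht, mul_comm]

theorem trace_pow_eq_sum (A : Matrix ι ι ℂ) (n : ℕ) :
    Matrix.trace (A ^ n) = ∑ f : Fin (n + 1) → ι,
      if f 0 = f (Fin.last n) then (∏ i : Fin n, A (f i.succ) (f i.castSucc)) else 0 := by
  rw [Matrix.trace]
  have hdiag : ∀ d : ι, Matrix.diag (A ^ n) d = ∑ f : Fin (n + 1) → ι,
      if f 0 = d ∧ f (Fin.last n) = d then (∏ i : Fin n, A (f i.succ) (f i.castSucc)) else 0 :=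
    fun d => pow_apply_eq_sum A n d d
  rw [Fintype.sum_congr _ _ hdiag, Finset.sum_comm]
  refine Finset.sum_congr rfl fun f _ => ?_
  have split : ∀ d : ι, (if f 0 = d ∧ f (Fin.last n) = d then
      (∏ i : Fin n, A (f i.succ) (f i.castSucc)) else 0) =
      if f 0 = d then (if f (Fin.last n) = d then
        (∏ i : Fin n, A (f i.succ) (f i.castSucc)) else 0) else 0 := by
    intro d
    by_cases hd : f 0 = d <;> simp [hd]
  rw [Fintype.sum_congr _ _ split, Finset.sum_ite_eq Finset.univ (f 0),
    if_pos (Finset.mem_univ _)]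
  by_cases hf : f 0 = f (Fin.last n)
  · rw [if_pos hf.symm, if_pos hf]
  · rw [if_neg (fun h => hf h.symm), if_neg hf]

/-- Closed chains of length `m` correspond to functions on `ZMod m`. -/
def cycEquiv (m : ℕ) [NeZero m] :
    (ZMod m → ι) ≃ {f : Fin (m + 1) → ι // f 0 = f (Fin.last m)} where
  toFun c := ⟨fun j => c ((j.val : ℕ) : ZMod m), by
    simp [Fin.val_last, ZMod.natCast_self]⟩
  invFun f x := f.1 ⟨x.val, lt_of_lt_of_le (ZMod.val_lt x) (Nat.le_succ m)⟩
  left_inv c := by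
    funext x
    exact congrArg c (ZMod.natCast_rightInverse x)
  right_inv f := by
    apply Subtype.ext
    funext j
    have haux : ∀ k : Fin (m + 1), (k : ℕ) = j.val % m → f.1 k = f.1 j := by
      intro k hk
      rcases Nat.lt_or_ge j.val m with h | h
      · have hkj : k = j := Fin.ext (by rw [hk, Nat.mod_eq_of_lt h])
        rw [hkj]
      · have hj : j = Fin.last m := Fin.ext (le_antisymm (Nat.lt_succ_iff.mp j.isLt) h)
        have hk0 : k = 0 := Fin.ext (by simp [hk, hj, Fin.val_last, Nat.mod_self])
        rw [hk0, hj]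
        exact f.2
    exact haux _ (ZMod.val_natCast m _)

end TraceCount

variable {V : Type*}

instance decIsNBCycle {G : SimpleGraph V} [DecidableEq V] {m : ℕ} [NeZero m]
    (c : ZMod m → G.Dart) : Decidable (IsNBCycle G c) :=
  inferInstanceAs (Decidable (∀ i, FollowsNB (c (i + 1)) (c i)))

theorem trace_pow_eq_card (G : SimpleGraph V) [Fintype V] [DecidableEq V]
    [DecidableRel G.Adj] (m : ℕ) [NeZero m] :
    Matrix.trace (nbMatrix G ^ m) =
      (Fintype.card {c : ZMod m → G.Dart // IsNBCycle G c} : ℂ) := by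
  rw [trace_pow_eq_sum, ← Finset.sum_filter]
  rw [Finset.sum_subtype (p := fun f : Fin (m + 1) → G.Dart => f 0 = f (Fin.last m)) _
    (fun x => by simp) (fun f => ∏ i : Fin m, nbMatrix G (f i.succ) (f i.castSucc))]
  rw [← Equiv.sum_comp (cycEquiv m)
    (fun f : {f : Fin (m + 1) → G.Dart // f 0 = f (Fin.last m)} =>
      ∏ i : Fin m, nbMatrix G (f.1 i.succ) (f.1 i.castSucc))]
  have key : ∀ c : ZMod m → G.Dart,
      (∏ i : Fin m, nbMatrix G (((cycEquiv m c) : {f : Fin (m + 1) → G.Dart //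
        f 0 = f (Fin.last m)}).1 i.succ) ((cycEquiv m c).1 i.castSucc)) =
      if IsNBCycle G c then (1 : ℂ) else 0 := by
    intro c
    have hterm : ∀ i : Fin m, nbMatrix G ((cycEquiv m c).1 i.succ) ((cycEquiv m c).1 i.castSucc) =
        if FollowsNB (c (((i.val : ℕ) : ZMod m) + 1)) (c ((i.val : ℕ) : ZMod m))
          then (1 : ℂ) else 0 := by
      intro i
      have h1 : ((cycEquiv m c).1 i.succ) = c (((i.val : ℕ) : ZMod m) + 1) := by
        show c (((i.succ.val : ℕ)) : ZMod m) = _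
        rw [Fin.val_succ]
        push_cast
        rfl
      have h2 : ((cycEquiv m c).1 i.castSucc) = c ((i.val : ℕ) : ZMod m) := by
        show c (((i.castSucc.val : ℕ)) : ZMod m) = _
        rw [Fin.coe_castSucc]
      rw [h1, h2]
      rfl
    by_cases hc : IsNBCycle G c
    · rw [if_pos hc, Fintype.prod_congr _ _ hterm]
      refine Finset.prod_eq_one fun i _ => ?_
      rw [if_pos (hc _)]
    · rw [if_neg hc, Fintype.prod_congr _ _ hterm]
      obtain ⟨x, hx⟩ := not_forall.mp hc
      refine Finset.prod_eq_zero (Finset.mem_univ (⟨x.val, ZMod.val_lt x⟩ : Fin m)) ?_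
      rw [if_neg]
      intro hfol
      exact hx (by simpa [ZMod.natCast_rightInverse x] using hfol)
  rw [Fintype.sum_congr _ _ key, Finset.sum_boole, Fintype.card_subtype]

end NBAux

namespace NBAux

variable {V : Type*} {G : SimpleGraph V}

/-- The minimal period (which divides `m`) of a cyclic function. -/
noncomputable def minPer {m : ℕ} [NeZero m] (c : ZMod m → G.Dart) : ℕ :=
  @Nat.find (fun l => 0 < l ∧ l ∣ m ∧ ∀ n, Lft c (n + l) = Lft c n) (Classical.decPred _)
    ⟨m, Nat.pos_of_ne_zero (NeZero.ne m), dvd_refl m, lft_add_self c⟩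

theorem minPer_spec {m : ℕ} [NeZero m] (c : ZMod m → G.Dart) :
    0 < minPer c ∧ minPer c ∣ m ∧ ∀ n, Lft c (n + minPer c) = Lft c n :=
  @Nat.find_spec (fun l => 0 < l ∧ l ∣ m ∧ ∀ n, Lft c (n + l) = Lft c n) (Classical.decPred _)
    ⟨m, Nat.pos_of_ne_zero (NeZero.ne m), dvd_refl m, lft_add_self c⟩

theorem minPer_min {m : ℕ} [NeZero m] (c : ZMod m → G.Dart) {l : ℕ}
    (h : 0 < l ∧ l ∣ m ∧ ∀ n, Lft c (n + l) = Lft c n) : minPer c ≤ l :=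
  @Nat.find_min' (fun l => 0 < l ∧ l ∣ m ∧ ∀ n, Lft c (n + l) = Lft c n) (Classical.decPred _)
    ⟨m, Nat.pos_of_ne_zero (NeZero.ne m), dvd_refl m, lft_add_self c⟩ l h

theorem isPrimitive_factorC {m l : ℕ} [NeZero m] [NeZero l] {c : ZMod m → G.Dart}
    (hc : IsNBCycle G c) (hld : l ∣ m) (hper : ∀ n, Lft c (n + l) = Lft c n)
    (hmin : ∀ l', 0 < l' → l' ∣ m → (∀ n, Lft c (n + l') = Lft c n) → l ≤ l') :
    IsPrimitiveCycle G (factorC l (Lft c)) := by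
  rw [prim_iff (isNBCycle_factorC (lft_follows hc) hper)]
  intro l' hdvd hper'
  rw [lft_factorC hper] at hper'
  have hl'0 : 0 < l' := by
    rcases Nat.eq_zero_or_pos l' with h0 | h
    · subst h0
      exact absurd (Nat.eq_zero_of_zero_dvd hdvd) (NeZero.ne l)
    · exact h
  exact hmin l' hl'0 (hdvd.trans hld) hper'

/-- The fiber of cycles with minimal period `l` is equivalent to primitive cycles
of length `l`. -/
noncomputable def fiberEquiv (G : SimpleGraph V) {m l : ℕ} [NeZero m]
    (hl0 : 0 < l) (hld : l ∣ m) :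
    {c : {c : ZMod m → G.Dart // IsNBCycle G c} // minPer c.1 = l} ≃ PrimCycle G l := by
  haveI : NeZero l := ⟨hl0.ne'⟩
  have hper : ∀ c : {c : {c : ZMod m → G.Dart // IsNBCycle G c} // minPer c.1 = l},
      ∀ n, Lft c.1.1 (n + l) = Lft c.1.1 n := fun c => by
    have h := (minPer_spec c.1.1).2.2
    rwa [c.2] at h
  have hmin : ∀ c : {c : {c : ZMod m → G.Dart // IsNBCycle G c} // minPer c.1 = l},
      ∀ l', 0 < l' → l' ∣ m → (∀ n, Lft c.1.1 (n + l') = Lft c.1.1 n) → l ≤ l' :=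
    fun c l' h1 h2 h3 => by
      have h := minPer_min c.1.1 ⟨h1, h2, h3⟩
      rwa [c.2] at h
  exact {
    toFun := fun c => ⟨factorC l (Lft c.1.1),
      isNBCycle_factorC (lft_follows c.1.2) (hper c),
      isPrimitive_factorC c.1.2 hld (hper c) (hmin c)⟩
    invFun := fun p => ⟨⟨p.1 ∘ ZMod.castHom hld (ZMod l), fun i => by
        simp only [Function.comp_apply, map_add, _root_.map_one]
        exact p.2.1 _⟩,
      le_antisymm
        (minPer_min _ ⟨hl0, hld, fun n => period_of_comp hld p.1 n⟩)
        (le_period_of_prim hld p.2.1 p.2.2 (minPer_spec _).2.2 (minPer_spec _).1)⟩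
    left_inv := fun c => by
      apply Subtype.ext
      apply Subtype.ext
      show factorC l (Lft c.1.1) ∘ ZMod.castHom hld (ZMod l) = c.1.1
      symm
      rw [eq_comp_iff hld]
      intro n
      rw [factorC_natCast (hper c)]
      rfl
    right_inv := fun p => by
      apply Subtype.ext
      funext x
      show Lft (p.1 ∘ ZMod.castHom hld (ZMod l)) x.val = p.1 x
      rw [lft_comp]
      exact (apply_val p.1 x).symm }

theorem card_cyc (G : SimpleGraph V) [Fintype V] [DecidableEq V] [DecidableRel G.Adj]
    (m : ℕ) [NeZero m] :
    Fintype.card {c : ZMod m → G.Dart // IsNBCycle G c} =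
      ∑ l ∈ m.divisors, Nat.card (PrimCycle G l) := by
  classical
  have hg : ∀ c : {c : ZMod m → G.Dart // IsNBCycle G c}, minPer c.1 ∈ m.divisors := fun c =>
    Nat.mem_divisors.mpr ⟨(minPer_spec c.1).2.1, NeZero.ne m⟩
  calc Fintype.card {c : ZMod m → G.Dart // IsNBCycle G c}
      = ∑ _c : {c : ZMod m → G.Dart // IsNBCycle G c}, 1 := by
        rw [← Finset.card_univ, Finset.card_eq_sum_ones]
    _ = ∑ j : {l // l ∈ m.divisors}, ∑ _c : {c : {c : ZMod m → G.Dart // IsNBCycle G c} //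
          (⟨minPer c.1, hg c⟩ : {l // l ∈ m.divisors}) = j}, 1 :=
        (Fintype.sum_fiberwise _ _).symm
    _ = ∑ j : {l // l ∈ m.divisors}, Nat.card (PrimCycle G j.1) := by
        refine Finset.sum_congr rfl fun j _ => ?_
        rw [← Finset.card_eq_sum_ones, Finset.card_univ, ← Nat.card_eq_fintype_card]
        refine Nat.card_congr ((Equiv.subtypeEquivRight fun c => ?_).trans
          (fiberEquiv G (Nat.pos_of_mem_divisors j.2) (Nat.dvd_of_mem_divisors j.2)))
        constructor
        · intro h
          simpa using congrArg Subtype.val h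
        · intro h
          exact Subtype.ext h
    _ = ∑ l ∈ m.divisors, Nat.card (PrimCycle G l) := Finset.sum_coe_sort m.divisors (fun l => Nat.card (PrimCycle G l))

theorem card_prim (G : SimpleGraph V) [Fintype V] [DecidableEq V] [DecidableRel G.Adj]
    (l : ℕ) [NeZero l] :
    Nat.card (PrimCycle G l) = l * Nat.card (PrimClass G l) := by
  letI st : Setoid (PrimCycle G l) := rotSetoid G l
  let rot : PrimCycle G l → ZMod l → PrimCycle G l := fun c k =>
    ⟨fun i => c.1 (i + k), fun i => by simpa [add_right_comm] using c.2.1 (i + k),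
      prim_rot c.2.1 c.2.2 k⟩
  have hmk : ∀ (c0 : PrimCycle G l) (k : ZMod l),
      Quotient.mk st (rot c0 k) = Quotient.mk st c0 := by
    intro c0 k
    have hrel : (rot c0 k) ≈ c0 :=
      ⟨-k, fun i => (congrArg c0.1 (neg_add_cancel_right i k)).symm⟩
    exact Quotient.sound hrel
  have hfree : ∀ (c0 : PrimCycle G l) (k k' : ZMod l), rot c0 k = rot c0 k' → k = k' := by
    intro c0 k k' h
    have h1 : (rot c0 k).1 = (rot c0 k').1 := congrArg Subtype.val h
    have hd : ∀ x, c0.1 (x + (k - k')) = c0.1 x := by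
      intro x
      have h2 := congrFun h1 (x - k')
      have e1 : x + (k - k') = x - k' + k := by ring
      have e2 : x - k' + k' = x := by ring
      rw [e1]
      calc c0.1 (x - k' + k) = c0.1 (x - k' + k') := h2
        _ = c0.1 x := by rw [e2]
    exact sub_eq_zero.mp (rot_eq_zero c0.2.1 c0.2.2 hd)
  have hbij : Function.Bijective
      (fun p : PrimClass G l × ZMod l => rot (Quotient.out p.1) p.2) := by
    constructor
    · rintro ⟨q, k⟩ ⟨q', k'⟩ h
      simp only at h
      have hq : q = q' := by
        rw [← Quotient.out_eq q, ← Quotient.out_eq q', ← hmk (Quotient.out q) k,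
          ← hmk (Quotient.out q') k', h]
      subst hq
      have hk : k = k' := hfree _ _ _ h
      rw [hk]
    · intro c
      obtain ⟨k, hk⟩ := Quotient.exact (Quotient.out_eq (Quotient.mk st c))
      exact ⟨(Quotient.mk st c, k), Subtype.ext (funext fun i => (hk i).symm)⟩
  have hcard := Nat.card_congr (Equiv.ofBijective _ hbij)
  rw [← hcard, Nat.card_prod, Nat.card_zmod, mul_comm]

end NBAux

/-- **Trace formula for the non-backtracking matrix**: for every `m ≥ 1`,
`trace(B^m) = Σ_{l | m} l · N_l` where `N_l` is the number of primitive cycle classes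
of length `l`. -/
theorem trace_nbMatrix_pow (G : SimpleGraph V) [Fintype V] [DecidableEq V]
    [DecidableRel G.Adj] (m : ℕ) (hm : 1 ≤ m) :
    Matrix.trace (nbMatrix G ^ m) =
      ∑ l ∈ m.divisors, (l : ℂ) * (Nat.card (PrimClass G l) : ℂ) := by
  haveI : NeZero m := ⟨by omega⟩
  rw [NBAux.trace_pow_eq_card G m, NBAux.card_cyc G m, Nat.cast_sum]
  refine Finset.sum_congr rfl fun l hl => ?_
  haveI : NeZero l := ⟨(Nat.pos_of_mem_divisors hl).ne'⟩
  rw [NBAux.card_prim G l]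
  push_cast
  ring
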